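/- Let (Ω,F,P) be a probability space, p ∈ (0,1), D : Ω → ℝ a random variable taking values in {0,1} with P(D = 1) = p, and γ, T : Ω → ℕ random variables with T ≤ γ pointwise. Assume D is independent of the pair (γ, T). Let θ⁰⁰, μᵈᵉ, λˢᵉ : ℕ → ℝ and ε : Ω → ℝ be such that Y := θ⁰⁰(γ) + μᵈᵉ(γ)·D + λˢᵉ(γ)·T + ε, where θ⁰⁰(γ), μᵈᵉ(γ), λˢᵉ(γ)·T, ε, Y are integrable, and E[ε·D] = 0 and E[ε] = 0. Then Cov(Y, D)/Var(D) = E[μᵈᵉ(γ)]; i.e., the population OLS coefficient on own treatment identifies the average direct effect. -/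

import Mathlib

open MeasureTheory ProbabilityTheory

/-- In the partially linear representation
`Y = θ⁰⁰(γ) + μᵈᵉ(γ)·D + λˢᵉ(γ)·T + ε` with randomized `D`, the population OLS
coefficient on own treatment, `Cov(Y,D)/Var(D)`, identifies the average direct
effect `E[μᵈᵉ(γ)]`. -/
theorem stmt7
    {Ω : Type*} [MeasurableSpace Ω] (P : Measure Ω) [IsProbabilityMeasure P]
    (p : ℝ) (hp0 : 0 < p) (hp1 : p < 1)
    (D : Ω → ℝ) (hDmeas : Measurable D) (hD01 : ∀ ω, D ω = 0 ∨ D ω = 1)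
    (hDp : P {ω | D ω = 1} = ENNReal.ofReal p)
    (γ T : Ω → ℕ) (hγmeas : Measurable γ) (hTmeas : Measurable T)
    (hTγ : ∀ ω, T ω ≤ γ ω)
    (hindep : IndepFun D (fun ω => (γ ω, T ω)) P)
    (θ00 μde lamse : ℕ → ℝ) (ε : Ω → ℝ) (Y : Ω → ℝ)
    (hY : ∀ ω, Y ω = θ00 (γ ω) + μde (γ ω) * D ω + lamse (γ ω) * (T ω : ℝ) + ε ω)
    (hθint : Integrable (fun ω => θ00 (γ ω)) P)
    (hμint : Integrable (fun ω => μde (γ ω)) P)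
    (hlamTint : Integrable (fun ω => lamse (γ ω) * (T ω : ℝ)) P)
    (hεint : Integrable ε P) (hYint : Integrable Y P)
    (hεD : ∫ ω, ε ω * D ω ∂P = 0) (hε : ∫ ω, ε ω ∂P = 0) :
    ((∫ ω, Y ω * D ω ∂P) - (∫ ω, Y ω ∂P) * (∫ ω, D ω ∂P)) /
        ((∫ ω, D ω * D ω ∂P) - (∫ ω, D ω ∂P) * (∫ ω, D ω ∂P))
      = ∫ ω, μde (γ ω) ∂P := by
  -- D is integrable (bounded by 1)
  have hDbd : ∀ ω, ‖D ω‖ ≤ 1 := by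
    intro ω; rcases hD01 ω with h | h <;> simp [h]
  have hDint : Integrable D P :=
    (integrable_const (1:ℝ)).mono' hDmeas.aestronglyMeasurable
      (Filter.Eventually.of_forall hDbd)
  -- D = indicator of {D = 1}
  have hAmeas : MeasurableSet {ω | D ω = 1} := hDmeas (measurableSet_singleton 1)
  have hDeq : D = Set.indicator {ω | D ω = 1} (fun _ => (1:ℝ)) := by
    funext ω
    rcases hD01 ω with h | h
    · simp [Set.indicator, h, Set.mem_setOf_eq]
    · simp [Set.indicator, h, Set.mem_setOf_eq]
  have hED : ∫ ω, D ω ∂P = p := by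
    rw [show (fun ω => D ω) = D from rfl, hDeq]
    rw [integral_indicator_const _ hAmeas]
    simp [measureReal_def, hDp, ENNReal.toReal_ofReal hp0.le]
  -- independence of D against functions of (γ, T)
  have hmeasNN : ∀ f : ℕ × ℕ → ℝ, Measurable f := fun f => measurable_of_countable f
  have hkey : ∀ f : ℕ × ℕ → ℝ, Integrable (fun ω => f (γ ω, T ω)) P →
      ∫ ω, f (γ ω, T ω) * D ω ∂P = (∫ ω, f (γ ω, T ω) ∂P) * p := by
    intro f hfint
    have hind : IndepFun (fun ω => f (γ ω, T ω)) D P :=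
      (hindep.comp measurable_id (hmeasNN f)).symm
    have h2 := hind.integral_mul_eq_mul_integral hfint.aestronglyMeasurable hDint.aestronglyMeasurable
    rw [show ((fun ω => f (γ ω, T ω)) * D) = fun ω => f (γ ω, T ω) * D ω from rfl] at h2
    rw [h2, hED]
  have hθD : ∫ ω, θ00 (γ ω) * D ω ∂P = (∫ ω, θ00 (γ ω) ∂P) * p :=
    hkey (fun q => θ00 q.1) hθint
  have hμD : ∫ ω, μde (γ ω) * D ω ∂P = (∫ ω, μde (γ ω) ∂P) * p :=
    hkey (fun q => μde q.1) hμint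
  have hlamD : ∫ ω, lamse (γ ω) * (T ω : ℝ) * D ω ∂P
      = (∫ ω, lamse (γ ω) * (T ω : ℝ) ∂P) * p :=
    hkey (fun q => lamse q.1 * (q.2 : ℝ)) hlamTint
  -- integrability of products with D
  have hprodint : ∀ f : ℕ × ℕ → ℝ, Integrable (fun ω => f (γ ω, T ω)) P →
      Integrable (fun ω => f (γ ω, T ω) * D ω) P := by
    intro f hfint
    refine hfint.norm.mono' (hfint.aestronglyMeasurable.mul hDmeas.aestronglyMeasurable)
      (Filter.Eventually.of_forall fun ω => ?_)
    rcases hD01 ω with h | h <;> simp [h]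
  have hθDint : Integrable (fun ω => θ00 (γ ω) * D ω) P :=
    hprodint (fun q => θ00 q.1) hθint
  have hμDint : Integrable (fun ω => μde (γ ω) * D ω) P :=
    hprodint (fun q => μde q.1) hμint
  have hlamDint : Integrable (fun ω => lamse (γ ω) * (T ω : ℝ) * D ω) P :=
    hprodint (fun q => lamse q.1 * (q.2 : ℝ)) hlamTint
  have hεDint : Integrable (fun ω => ε ω * D ω) P :=
    hεint.norm.mono' (hεint.aestronglyMeasurable.mul hDmeas.aestronglyMeasurable)
      (Filter.Eventually.of_forall fun ω => by
        rcases hD01 ω with h | h <;> simp [h])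
  -- E[Y D]
  have hYD : ∫ ω, Y ω * D ω ∂P
      = (∫ ω, θ00 (γ ω) ∂P) * p + (∫ ω, μde (γ ω) ∂P) * p
        + (∫ ω, lamse (γ ω) * (T ω : ℝ) ∂P) * p := by
    have heq : ∀ ω, Y ω * D ω
        = θ00 (γ ω) * D ω + μde (γ ω) * D ω + lamse (γ ω) * (T ω : ℝ) * D ω
          + ε ω * D ω := by
      intro ω
      rcases hD01 ω with h | h <;> rw [hY ω] <;> rw [h] <;> ring
    calc ∫ ω, Y ω * D ω ∂P
        = ∫ ω, (θ00 (γ ω) * D ω + μde (γ ω) * D ω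
            + lamse (γ ω) * (T ω : ℝ) * D ω + ε ω * D ω) ∂P := by
          exact integral_congr_ae (Filter.Eventually.of_forall heq)
      _ = _ := by
          have h12 : Integrable (fun ω => θ00 (γ ω) * D ω + μde (γ ω) * D ω) P :=
            hθDint.add hμDint
          have h123 : Integrable (fun ω => θ00 (γ ω) * D ω + μde (γ ω) * D ω
              + lamse (γ ω) * (T ω : ℝ) * D ω) P := h12.add hlamDint
          rw [integral_add h123 hεDint, integral_add h12 hlamDint,
            integral_add hθDint hμDint, hθD, hμD, hlamD, hεD, add_zero]
  -- E[Y]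
  have hEY : ∫ ω, Y ω ∂P
      = (∫ ω, θ00 (γ ω) ∂P) + (∫ ω, μde (γ ω) ∂P) * p
        + (∫ ω, lamse (γ ω) * (T ω : ℝ) ∂P) := by
    calc ∫ ω, Y ω ∂P
        = ∫ ω, (θ00 (γ ω) + μde (γ ω) * D ω
            + lamse (γ ω) * (T ω : ℝ) + ε ω) ∂P :=
          integral_congr_ae (Filter.Eventually.of_forall hY)
      _ = _ := by
          have h12 : Integrable (fun ω => θ00 (γ ω) + μde (γ ω) * D ω) P :=
            hθint.add hμDint
          have h123 : Integrable (fun ω => θ00 (γ ω) + μde (γ ω) * D ω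
              + lamse (γ ω) * (T ω : ℝ)) P := h12.add hlamTint
          rw [integral_add h123 hεint, integral_add h12 hlamTint,
            integral_add hθint hμDint, hμD, hε, add_zero]
  -- E[D * D] = E[D]
  have hDD : ∫ ω, D ω * D ω ∂P = p := by
    have : ∀ ω, D ω * D ω = D ω := by
      intro ω; rcases hD01 ω with h | h <;> simp [h]
    rw [integral_congr_ae (Filter.Eventually.of_forall this), hED]
  rw [hYD, hEY, hED, hDD]
  have hne : p - p * p ≠ 0 := by nlinarith
  have h1p : 1 - p ≠ 0 := by linarith
  field_simp
  ring
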